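/- arXiv:2409.15647 — 3 statements merged into one kernel-verified Lean document; each statement's English description precedes it below -/
import Mathlib

section
/- Define step (a, b) = (Nat.xor a b, 2 * Nat.land a b). For all natural numbers a and b with a < 2^n and b < 2^n, iterating step at most n + 1 times starting from (a, b) yields a pair whose second component is 0, and whose first component equals a + b. -/
def addStep (p : ℕ × ℕ) : ℕ × ℕ := (p.1 ^^^ p.2, 2 * (p.1 &&& p.2))

lemma xor_add_two_mul_and (a b : ℕ) : (a ^^^ b) + 2 * (a &&& b) = a + b := by
  induction a using Nat.binaryRec generalizing b with
  | zero => simp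
  | bit x m ih =>
    induction b using Nat.binaryRec with
    | zero => simp
    | bit y n _ =>
      rw [Nat.xor_bit, Nat.land_bit]
      have h := ih n
      simp only [Nat.bit_val] at *
      cases x <;> cases y <;> simp <;> omega

lemma pow_dvd_and_right (k a b : ℕ) (h : 2 ^ k ∣ b) : 2 ^ k ∣ a &&& b := by
  rw [Nat.dvd_iff_mod_eq_zero] at h ⊢
  calc (a &&& b) % 2 ^ k = (a &&& b) &&& (2 ^ k - 1) := by
        rw [Nat.and_two_pow_sub_one_eq_mod]
      _ = a &&& (b &&& (2 ^ k - 1)) := Nat.and_assoc _ _ _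
      _ = a &&& (b % 2 ^ k) := by rw [Nat.and_two_pow_sub_one_eq_mod]
      _ = 0 := by rw [h, Nat.and_zero]

lemma addStep_iter_snd_dvd_aux (k : ℕ) :
    ∀ a b j : ℕ, 2 ^ j ∣ b → 2 ^ (j + k) ∣ (addStep^[k] (a, b)).2 := by
  induction k with
  | zero => intro a b j h; simpa using h
  | succ k ih =>
    intro a b j h
    rw [Function.iterate_succ_apply]
    have h' : 2 ^ (j + 1) ∣ 2 * (a &&& b) := by
      rw [pow_succ, mul_comm]
      exact Nat.mul_dvd_mul_left 2 (pow_dvd_and_right j a b h)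
    have := ih (a ^^^ b) (2 * (a &&& b)) (j + 1) h'
    simpa [addStep, Nat.add_assoc, Nat.add_comm 1 k] using this

lemma addStep_iter_snd_dvd (k a b : ℕ) : 2 ^ k ∣ (addStep^[k] (a, b)).2 := by
  simpa using addStep_iter_snd_dvd_aux k a b 0 (one_dvd b)

lemma addStep_iter_sum (k a b : ℕ) :
    (addStep^[k] (a, b)).1 + (addStep^[k] (a, b)).2 = a + b := by
  induction k generalizing a b with
  | zero => simp
  | succ k ih =>
    rw [Function.iterate_succ_apply]
    have := ih (a ^^^ b) (2 * (a &&& b))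
    simp only [addStep] at this ⊢
    rw [this, xor_add_two_mul_and]

theorem addStep_terminates (n a b : ℕ) (ha : a < 2 ^ n) (hb : b < 2 ^ n) :
    ∃ k ≤ n + 1, (addStep^[k] (a, b)).2 = 0 ∧ (addStep^[k] (a, b)).1 = a + b := by
  refine ⟨n + 1, le_refl _, ?_⟩
  have hdvd := addStep_iter_snd_dvd (n + 1) a b
  have hsum := addStep_iter_sum (n + 1) a b
  have hlt : (addStep^[n + 1] (a, b)).2 < 2 ^ (n + 1) := by
    have : a + b < 2 ^ (n + 1) := by
      rw [pow_succ]; omega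
    omega
  have h2 : (addStep^[n + 1] (a, b)).2 = 0 := Nat.eq_zero_of_dvd_of_lt hdvd hlt
  exact ⟨h2, by omega⟩
end

section
/- Define step (a, b) = (Nat.xor a b, 2 * Nat.land a b). If the second component of step^[k] (a, b) is 0, then the first component of step^[k] (a, b) equals a + b. -/
lemma addStep_invariant (k : ℕ) (p : ℕ × ℕ) :
    (addStep^[k] p).1 + (addStep^[k] p).2 = p.1 + p.2 := by
  induction k generalizing p with
  | zero => simp
  | succ n ih =>
    rw [Function.iterate_succ_apply, ih]
    simp [addStep, xor_add_two_mul_and]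

theorem addStep_partial_correct (a b k : ℕ) (h : (addStep^[k] (a, b)).2 = 0) :
    (addStep^[k] (a, b)).1 = a + b := by
  have := addStep_invariant k (a, b)
  omega
end

section
/- With shiftRight xs = default :: xs.dropLast acting on lists of length 2n (a query of length n padded with n default tokens), iterating shiftRight exactly n times maps the list xs ++ pad (with xs of length n and pad of length n consisting of default elements) to pad ++ xs. -/
def shiftRight {α : Type*} [Inhabited α] (xs : List α) : List α :=
  default :: xs.dropLast

lemma shiftRight_iterate_take {α : Type*} [Inhabited α] (l : List α) :
    ∀ k, k ≤ l.length →
      shiftRight^[k] l = List.replicate k (default : α) ++ l.take (l.length - k) := by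
  intro k
  induction k with
  | zero => simp
  | succ k ih =>
    intro hk
    rw [Function.iterate_succ_apply', ih (Nat.le_of_succ_le hk)]
    unfold shiftRight
    have hne : l.take (l.length - k) ≠ [] := by
      apply List.ne_nil_of_length_pos
      simp only [List.length_take]
      omega
    have hdl : (l.take (l.length - k)).dropLast = l.take (l.length - (k + 1)) := by
      rw [List.dropLast_eq_take, List.take_take, List.length_take]
      congr 1
      omega
    rw [List.dropLast_append_of_ne_nil hne, hdl]
    simp [List.replicate_succ]

theorem shiftRight_iterate_copy {α : Type*} [Inhabited α] (n : ℕ) (xs : List α)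
    (hlen : xs.length = n) :
    shiftRight^[n] (xs ++ List.replicate n (default : α)) =
      List.replicate n (default : α) ++ xs := by
  have h := shiftRight_iterate_take (xs ++ List.replicate n (default : α)) n (by simp [hlen])
  rw [h]
  congr 1
  simp [hlen, List.take_append_of_le_length, List.take_of_length_le]
end
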